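/- Fix integers n ≥ 1 and m ≥ 0. The map λ ↦ λ̄ is a bijection from the set of hook partitions (partitions λ with λ_{n+1} ≤ m) onto the set of weights μ ∈ ℤ_{≥0}^{n+m} satisfying condition (H1): μ_1 ≥ μ_2 ≥ … ≥ μ_n ≥ 0, μ_{n+1} ≥ μ_{n+2} ≥ … ≥ μ_{n+m} ≥ 0, and μ_n ≥ #{j : 1 ≤ j ≤ m, μ_{n+j} > 0}. -/

import Mathlib

/-! Common definitions: the weight lattice `ℤ^{n+m}` is modeled as functions `ℕ → ℤ`
(only the coordinates `1, …, n+m` are relevant), with standard basis vectors `eps i`.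
Index `i` has parity 0 if `i ≤ n` and parity 1 otherwise. -/

namespace TwoBoundary

/-- The standard basis vector `ε_i` of the weight lattice. -/
def eps (i : ℕ) : ℕ → ℤ := fun k => if k = i then 1 else 0

/-- The sign of the positive root `ε_i − ε_j`: `+1` if it is even
(i.e. the parities of `i` and `j` agree), `−1` if it is odd. -/
def rootSign (n i j : ℕ) : ℤ := if (i ≤ n) = (j ≤ n) then 1 else -1

/-- `2ρ` = (sum of even positive roots) − (sum of odd positive roots). -/
def twoRho (n m : ℕ) : ℕ → ℤ :=
  ∑ i ∈ Finset.Icc 1 (n + m), ∑ j ∈ Finset.Icc 1 (n + m),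
    if i < j then rootSign n i j • (eps i - eps j) else 0

/-- The bilinear form with `⟨ε_i, ε_j⟩ = (−1)^{parity i} δ_{ij}`. -/
def form (n m : ℕ) (μ ν : ℕ → ℤ) : ℤ :=
  ∑ i ∈ Finset.Icc 1 (n + m), (if i ≤ n then (1 : ℤ) else -1) * (μ i * ν i)

/-- `φ_t = ε_1 + ⋯ + ε_t`. -/
def phi (t : ℕ) : ℕ → ℤ := fun k => if 1 ≤ k ∧ k ≤ t then 1 else 0

/-- `ψ_s = ε_{n+1} + ⋯ + ε_{n+s}`. -/
def psi (n s : ℕ) : ℕ → ℤ := fun k => if n + 1 ≤ k ∧ k ≤ n + s then 1 else 0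

/-- A partition, given by its sequence of parts `λ_1 ≥ λ_2 ≥ ⋯` (the index-0 value
is normalized to `0`): weakly decreasing with finitely many nonzero terms. -/
def IsPartition (lam : ℕ → ℕ) : Prop :=
  lam 0 = 0 ∧ (∀ i, 1 ≤ i → lam (i + 1) ≤ lam i) ∧ ∃ N, ∀ i, N ≤ i → lam i = 0

/-- A hook partition (relative to `(n, m)`): a partition with `λ_{n+1} ≤ m`. -/
def IsHookPartition (n m : ℕ) (lam : ℕ → ℕ) : Prop :=
  IsPartition lam ∧ lam (n + 1) ≤ m

/-- The weight `λ̄` associated to a hook partition `λ`: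
`λ̄_i = λ_i` for `1 ≤ i ≤ n`, and `λ̄_{n+j} = #{k > n : λ_k ≥ j}` for `1 ≤ j ≤ m`. -/
noncomputable def barWeight (n m : ℕ) (lam : ℕ → ℕ) : ℕ → ℤ := fun i =>
  if 1 ≤ i ∧ i ≤ n then (lam i : ℤ)
  else if n + 1 ≤ i ∧ i ≤ n + m then ({k : ℕ | n < k ∧ i - n ≤ lam k}.ncard : ℤ)
  else 0

/-- The set `𝒫₀` of partitions occurring in the decomposition of
`L((a^p)) ⊗ L((b^q))` (for `q ≤ p`), by the combinatorial description of
Okada and Stanley. -/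
def InP0 (a b p q : ℕ) (lam : ℕ → ℕ) : Prop :=
  IsPartition lam ∧
  (∀ i, p + q < i → lam i = 0) ∧
  (∀ i, 1 ≤ i → i ≤ q → lam i + lam (p + q + 1 - i) = a + b) ∧
  (∀ i, q + 1 ≤ i → i ≤ p → lam i = a) ∧
  (∀ i, 1 ≤ i → i ≤ q → max a b ≤ lam i)

/-- Condition (H1) on a weight `μ ∈ ℤ_{≥0}^{n+m}`:
`μ_1 ≥ ⋯ ≥ μ_n ≥ 0`, `μ_{n+1} ≥ ⋯ ≥ μ_{n+m} ≥ 0`, and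
`μ_n ≥ #{j : 1 ≤ j ≤ m, μ_{n+j} > 0}` (coordinates outside `1, …, n+m` vanish). -/
def SatisfiesH1 (n m : ℕ) (μ : ℕ → ℤ) : Prop :=
  μ 0 = 0 ∧ (∀ i, n + m < i → μ i = 0) ∧
  (∀ i, 1 ≤ i → i ≤ n + m → 0 ≤ μ i) ∧
  (∀ i, 1 ≤ i → i + 1 ≤ n → μ (i + 1) ≤ μ i) ∧
  (∀ i, n + 1 ≤ i → i + 1 ≤ n + m → μ (i + 1) ≤ μ i) ∧
  ((((Finset.Icc 1 m).filter fun j => 0 < μ (n + j)).card : ℤ) ≤ μ n)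

lemma partition_anti {lam : ℕ → ℕ} (h : ∀ i, 1 ≤ i → lam (i + 1) ≤ lam i) :
    ∀ i j, 1 ≤ i → i ≤ j → lam j ≤ lam i := by
  intro i j h1 hij
  induction j with
  | zero => omega
  | succ j ih =>
    rcases Nat.eq_or_lt_of_le hij with h' | h'
    · rw [h']
    · exact le_trans (h j (by omega)) (ih (by omega))

lemma mu_anti {n m : ℕ} {μ : ℕ → ℤ}
    (h : ∀ i, n + 1 ≤ i → i + 1 ≤ n + m → μ (i + 1) ≤ μ i) :
    ∀ i j, n + 1 ≤ i → i ≤ j → j ≤ n + m → μ j ≤ μ i := by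
  intro i j h1 hij hjm
  induction j with
  | zero => omega
  | succ j ih =>
    rcases Nat.eq_or_lt_of_le hij with h' | h'
    · rw [h']
    · exact le_trans (h j (by omega) (by omega)) (ih (by omega) (by omega))

lemma galois_lam {lam : ℕ → ℕ} (hdec : ∀ i, 1 ≤ i → lam (i + 1) ≤ lam i)
    {N : ℕ} (hN : ∀ i, N ≤ i → lam i = 0) (n : ℕ) {i j : ℕ} (hi : 1 ≤ i) (hj : 1 ≤ j) :
    i ≤ ((Finset.Ioc n (n + N)).filter fun k => j ≤ lam k).card ↔ j ≤ lam (n + i) := by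
  constructor
  · intro hc
    by_contra hlt
    push_neg at hlt
    have hsub : ((Finset.Ioc n (n + N)).filter fun k => j ≤ lam k) ⊆ Finset.Ioc n (n + i - 1) := by
      intro k hk
      simp only [Finset.mem_filter, Finset.mem_Ioc] at hk ⊢
      refine ⟨hk.1.1, ?_⟩
      by_contra hge
      push_neg at hge
      have := partition_anti hdec (n + i) k (by omega) (by omega)
      omega
    have := Finset.card_le_card hsub
    rw [Nat.card_Ioc] at this
    omega
  · intro hle
    have hNi : n + i < N := by
      by_contra hge
      push_neg at hge
      have := hN (n + i) hge
      omega
    have hsub : Finset.Ioc n (n + i) ⊆ ((Finset.Ioc n (n + N)).filter fun k => j ≤ lam k) := by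
      intro k hk
      simp only [Finset.mem_filter, Finset.mem_Ioc] at hk ⊢
      refine ⟨⟨hk.1, by omega⟩, ?_⟩
      exact le_trans hle (partition_anti hdec k (n + i) (by omega) hk.2)
    have := Finset.card_le_card hsub
    rwa [Nat.card_Ioc, Nat.add_sub_cancel_left] at this

lemma galois_mu {n m : ℕ} {μ : ℕ → ℤ}
    (hdec : ∀ i, n + 1 ≤ i → i + 1 ≤ n + m → μ (i + 1) ≤ μ i)
    {i k : ℕ} (hk1 : 1 ≤ k) (hkm : k ≤ m) :
    k ≤ ((Finset.Icc 1 m).filter fun j => (i : ℤ) ≤ μ (n + j)).card ↔ (i : ℤ) ≤ μ (n + k) := by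
  constructor
  · intro hc
    by_contra hlt
    push_neg at hlt
    have hsub : ((Finset.Icc 1 m).filter fun j => (i : ℤ) ≤ μ (n + j)) ⊆ Finset.Icc 1 (k - 1) := by
      intro j hj
      simp only [Finset.mem_filter, Finset.mem_Icc] at hj ⊢
      refine ⟨hj.1.1, ?_⟩
      by_contra hge
      push_neg at hge
      have h1 := mu_anti hdec (n + k) (n + j) (by omega) (by omega) (by omega)
      have h2 := hj.2
      omega
    have := Finset.card_le_card hsub
    rw [Nat.card_Icc] at this
    omega
  · intro hle
    have hsub : Finset.Icc 1 k ⊆ ((Finset.Icc 1 m).filter fun j => (i : ℤ) ≤ μ (n + j)) := by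
      intro j hj
      simp only [Finset.mem_filter, Finset.mem_Icc] at hj ⊢
      refine ⟨⟨hj.1, by omega⟩, ?_⟩
      exact le_trans hle (mu_anti hdec (n + j) (n + k) (by omega) (by omega) (by omega))
    have := Finset.card_le_card hsub
    rwa [Nat.card_Icc, Nat.add_sub_cancel] at this

lemma eq_of_galois {a : ℕ} {b : ℤ} (hb : 0 ≤ b)
    (h : ∀ i : ℕ, 1 ≤ i → ((i : ℤ) ≤ b ↔ i ≤ a)) : (a : ℤ) = b := by
  have h1 := h (a + 1) (by omega)
  have h2 := h (b.toNat + 1) (by omega)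
  push_cast at h1 h2
  omega

lemma nat_eq_of_iff {a b m : ℕ} (ha : a ≤ m) (hb : b ≤ m)
    (h : ∀ j, 1 ≤ j → j ≤ m → (j ≤ a ↔ j ≤ b)) : a = b := by
  by_contra hne
  rcases Nat.lt_or_ge a b with hlt | hge
  · have := h (a + 1) (by omega) (by omega)
    omega
  · have := h (b + 1) (by omega) (by omega)
    omega

lemma barWeight_tail {n m : ℕ} {lam : ℕ → ℕ} {N : ℕ}
    (hN : ∀ i, N ≤ i → lam i = 0) {j : ℕ} (hj1 : 1 ≤ j) (hjm : j ≤ m) :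
    barWeight n m lam (n + j) =
      (((Finset.Ioc n (n + N)).filter fun k => j ≤ lam k).card : ℤ) := by
  have hset : {k : ℕ | n < k ∧ (n + j) - n ≤ lam k} =
      ↑((Finset.Ioc n (n + N)).filter fun k => j ≤ lam k) := by
    ext k
    simp only [Set.mem_setOf_eq, Finset.coe_filter, Finset.mem_Ioc, Nat.add_sub_cancel_left]
    constructor
    · rintro ⟨hk, hlam⟩
      refine ⟨⟨hk, ?_⟩, hlam⟩
      by_contra hge
      push_neg at hge
      have := hN k (by omega)
      omega
    · rintro ⟨⟨hk, _⟩, hlam⟩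
      exact ⟨hk, hlam⟩
  simp only [barWeight]
  rw [if_neg (by omega), if_pos (by omega), hset, Set.ncard_coe_finset]

/-- for `n ≥ 1`, the map `λ ↦ λ̄` is a bijection from the set of hook
partitions onto the set of weights satisfying condition (H1). -/
theorem barWeight_bijOn (n m : ℕ) (hn : 1 ≤ n) :
    Set.BijOn (barWeight n m)
      {lam : ℕ → ℕ | IsHookPartition n m lam}
      {μ : ℕ → ℤ | SatisfiesH1 n m μ} := by
  classical
  refine ⟨?_, ?_, ?_⟩
  · -- MapsTo
    intro lam hlam
    obtain ⟨⟨h0, hdec, N, hN⟩, hhook⟩ := hlam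
    simp only [Set.mem_setOf_eq, SatisfiesH1]
    refine ⟨?_, ?_, ?_, ?_, ?_, ?_⟩
    · simp only [barWeight]
      rw [if_neg (by omega), if_neg (by omega)]
    · intro i hi
      simp only [barWeight]
      rw [if_neg (by omega), if_neg (by omega)]
    · intro i h1 h2
      simp only [barWeight]
      split
      · positivity
      · split
        · positivity
        · exact le_refl 0
    · intro i h1 h2
      simp only [barWeight]
      rw [if_pos (show 1 ≤ i + 1 ∧ i + 1 ≤ n by omega), if_pos (show 1 ≤ i ∧ i ≤ n by omega)]
      exact_mod_cast hdec i h1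
    · intro i hi1 hi2
      obtain ⟨j, rfl⟩ : ∃ j, i = n + j := ⟨i - n, by omega⟩
      have hj1 : 1 ≤ j := by omega
      rw [show n + j + 1 = n + (j + 1) by omega]
      rw [barWeight_tail hN (by omega) (by omega), barWeight_tail hN hj1 (by omega)]
      have hsub : ((Finset.Ioc n (n + N)).filter fun k => j + 1 ≤ lam k) ⊆
          ((Finset.Ioc n (n + N)).filter fun k => j ≤ lam k) := by
        intro k hk
        simp only [Finset.mem_filter] at hk ⊢
        exact ⟨hk.1, by omega⟩
      exact_mod_cast Finset.card_le_card hsub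
    · have hfe : ((Finset.Icc 1 m).filter fun j => 0 < barWeight n m lam (n + j)) =
          Finset.Icc 1 (lam (n + 1)) := by
        ext j
        simp only [Finset.mem_filter, Finset.mem_Icc]
        constructor
        · rintro ⟨⟨hj1, hjm⟩, hpos⟩
          rw [barWeight_tail hN hj1 hjm] at hpos
          have h1 : 1 ≤ ((Finset.Ioc n (n + N)).filter fun k => j ≤ lam k).card := by omega
          exact ⟨hj1, (galois_lam hdec hN n le_rfl hj1).mp h1⟩
        · rintro ⟨hj1, hjl⟩
          have hjm : j ≤ m := le_trans hjl hhook
          refine ⟨⟨hj1, hjm⟩, ?_⟩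
          rw [barWeight_tail hN hj1 hjm]
          have h1 := (galois_lam hdec hN n le_rfl hj1).mpr hjl
          omega
      rw [hfe, Nat.card_Icc]
      have hbn : barWeight n m lam n = (lam n : ℤ) := by
        simp only [barWeight]
        rw [if_pos (by omega)]
      rw [hbn]
      have := hdec n hn
      push_cast
      omega
  · -- InjOn
    intro lam hlam lam' hlam' heq
    obtain ⟨⟨h0, hdec, N, hN⟩, hhook⟩ := hlam
    obtain ⟨⟨h0', hdec', N', hN'⟩, hhook'⟩ := hlam'
    funext i
    rcases Nat.eq_zero_or_pos i with rfl | hi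
    · rw [h0, h0']
    by_cases hin : i ≤ n
    · have h := congrFun heq i
      simp only [barWeight, if_pos (show 1 ≤ i ∧ i ≤ n from ⟨hi, hin⟩)] at h
      exact_mod_cast h
    · push_neg at hin
      obtain ⟨k, rfl⟩ : ∃ k, i = n + k := ⟨i - n, by omega⟩
      have hk1 : 1 ≤ k := by omega
      have hb : lam (n + k) ≤ m :=
        le_trans (partition_anti hdec (n + 1) (n + k) (by omega) (by omega)) hhook
      have hb' : lam' (n + k) ≤ m :=
        le_trans (partition_anti hdec' (n + 1) (n + k) (by omega) (by omega)) hhook'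
      apply nat_eq_of_iff hb hb'
      intro j hj1 hjm
      rw [← galois_lam hdec hN n hk1 hj1, ← galois_lam hdec' hN' n hk1 hj1]
      have e := congrFun heq (n + j)
      rw [barWeight_tail hN hj1 hjm, barWeight_tail hN' hj1 hjm] at e
      omega
  · -- SurjOn
    intro μ hμ
    obtain ⟨hμ0, hμtop, hμpos, hμdec1, hμdec2, hμcount⟩ := hμ
    set d : ℕ → ℕ := fun k => ((Finset.Icc 1 m).filter fun j => (k : ℤ) ≤ μ (n + j)).card with hd
    set lam : ℕ → ℕ := fun i => if i = 0 then 0 else if i ≤ n then (μ i).toNat else d (i - n)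
      with hlamdef
    have hlam0 : lam 0 = 0 := by simp [hlamdef]
    have hlamle : ∀ i, 1 ≤ i → i ≤ n → lam i = (μ i).toNat := by
      intro i h1 h2
      simp only [hlamdef]
      rw [if_neg (by omega), if_pos h2]
    have hlamgt : ∀ i, n < i → lam i = d (i - n) := by
      intro i h1
      simp only [hlamdef]
      rw [if_neg (by omega), if_neg (by omega)]
    have hdantitone : ∀ k k' : ℕ, k ≤ k' → d k' ≤ d k := by
      intro k k' hkk
      apply Finset.card_le_card
      intro j hj
      simp only [Finset.mem_filter] at hj ⊢
      refine ⟨hj.1, le_trans ?_ hj.2⟩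
      exact_mod_cast hkk
    have hd1len : (d 1 : ℤ) ≤ μ n := by
      have he : ((Finset.Icc 1 m).filter fun j => ((1 : ℕ) : ℤ) ≤ μ (n + j)) =
          ((Finset.Icc 1 m).filter fun j => 0 < μ (n + j)) := by
        apply Finset.filter_congr
        intro j _
        omega
      simp only [hd]
      rw [he]
      exact hμcount
    have hdec : ∀ i, 1 ≤ i → lam (i + 1) ≤ lam i := by
      intro i h1
      rcases lt_trichotomy i n with hlt | heq | hgt
      · rw [hlamle (i + 1) (by omega) (by omega), hlamle i h1 (by omega)]
        exact Int.toNat_le_toNat (hμdec1 i h1 (by omega))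
      · subst heq
        rw [hlamgt (i + 1) (by omega), hlamle i h1 le_rfl]
        rw [show i + 1 - i = 1 by omega]
        omega
      · rw [hlamgt (i + 1) (by omega), hlamgt i (by omega)]
        rw [show i + 1 - n = (i - n) + 1 by omega]
        exact hdantitone _ _ (Nat.le_succ _)
    have hbound : ∀ i, n + 1 + (Finset.Icc 1 m).sup (fun j => (μ (n + j)).toNat) ≤ i →
        lam i = 0 := by
      intro i hi
      rw [hlamgt i (by omega)]
      have hempty : ((Finset.Icc 1 m).filter fun j => ((i - n : ℕ) : ℤ) ≤ μ (n + j)) = ∅ := by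
        rw [Finset.filter_eq_empty_iff]
        intro j hj
        have hle := Finset.le_sup (f := fun j => (μ (n + j)).toNat) hj
        omega
      simp only [hd]
      rw [hempty, Finset.card_empty]
    have hhook : lam (n + 1) ≤ m := by
      rw [hlamgt (n + 1) (by omega), show n + 1 - n = 1 by omega]
      simp only [hd]
      refine le_trans (Finset.card_filter_le _ _) ?_
      rw [Nat.card_Icc]
      omega
    refine ⟨lam, ⟨⟨hlam0, hdec, _, hbound⟩, hhook⟩, ?_⟩
    funext i
    rcases Nat.eq_zero_or_pos i with rfl | hi1
    · simp only [barWeight]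
      rw [if_neg (by omega), if_neg (by omega), hμ0]
    by_cases hin : i ≤ n
    · simp only [barWeight, if_pos (show 1 ≤ i ∧ i ≤ n from ⟨hi1, hin⟩)]
      rw [hlamle i hi1 hin]
      exact Int.toNat_of_nonneg (hμpos i hi1 (by omega))
    · push_neg at hin
      by_cases him : i ≤ n + m
      · obtain ⟨k, rfl⟩ : ∃ k, i = n + k := ⟨i - n, by omega⟩
        have hk1 : 1 ≤ k := by omega
        have hkm : k ≤ m := by omega
        rw [barWeight_tail hbound hk1 hkm]
        apply eq_of_galois (hμpos (n + k) (by omega) (by omega))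
        intro i' hi'
        rw [galois_lam hdec hbound n hi' hk1, hlamgt (n + i') (by omega),
          Nat.add_sub_cancel_left]
        simp only [hd]
        exact (galois_mu hμdec2 hk1 hkm).symm
      · push_neg at him
        simp only [barWeight]
        rw [if_neg (by omega), if_neg (by omega)]
        exact (hμtop i him).symm


end TwoBoundary
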